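/- (Identification of principal-stratum proportions.) Under unconfoundedness, positivity, and monotonicity: E[ℓ0(X)] = P(A1 = A0 = 1) (the always-taker proportion), E[1 − ℓ1(X)] = P(A1 = A0 = 0) (the never-taker proportion), and E[ℓ1(X) − ℓ0(X)] = P(A1 > A0) (the complier proportion); these three quantities sum to 1. -/

import Mathlib

open MeasureTheory ProbabilityTheory

private lemma intg_of_bdd {Ω : Type*} [MeasurableSpace Ω] (P : Measure Ω) [IsFiniteMeasure P]
    {f : Ω → ℝ} (hf : Measurable f) {C : ℝ} (hC : ∀ ω, |f ω| ≤ C) : Integrable f P :=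
  ⟨hf.aestronglyMeasurable, HasFiniteIntegral.of_bounded (C := C) (Filter.Eventually.of_forall hC)⟩

private lemma key_int {Ω S : Type*} [MeasurableSpace Ω] [MeasurableSpace S]
    (P : Measure Ω) [IsProbabilityMeasure P]
    (X : Ω → S) (hX : Measurable X) (W B : Ω → ℝ) (hW : Measurable W) (hB : Measurable B)
    (hW01 : ∀ ω, W ω = 0 ∨ W ω = 1) (hB01 : ∀ ω, B ω = 0 ∨ B ω = 1)
    (f : S → ℝ) (hf : Measurable f) (ε : ℝ) (hε : 0 < ε)
    (hfbd : ∀ x, ε ≤ f x ∧ f x ≤ 1)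
    (hVf : ∀ g : S → ℝ, Measurable g → (∃ C, ∀ x, |g x| ≤ C) →
      ∫ ω, W ω * g (X ω) ∂P = ∫ ω, f (X ω) * g (X ω) ∂P)
    (hU : ∀ g : S → ℝ, Measurable g → (∃ C, ∀ x, |g x| ≤ C) →
      ∫ ω, W ω * B ω * g (X ω) ∂P = ∫ ω, f (X ω) * B ω * g (X ω) ∂P)
    (l : S → ℝ) (hl : Measurable l)
    (hlv : ∀ g : S → ℝ, Measurable g → (∃ C, ∀ x, |g x| ≤ C) →
      ∫ ω, B ω * W ω * g (X ω) ∂P = ∫ ω, l (X ω) * W ω * g (X ω) ∂P) :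
    (∀ᵐ ω ∂P, l (X ω) = max 0 (min 1 (l (X ω)))) ∧
    ∫ ω, l (X ω) ∂P = ∫ ω, B ω ∂P := by
  have hWnn : ∀ ω, 0 ≤ W ω := fun ω => by rcases hW01 ω with h | h <;> rw [h] <;> norm_num
  have hW1 : ∀ ω, W ω ≤ 1 := fun ω => by rcases hW01 ω with h | h <;> rw [h] <;> norm_num
  have hBnn : ∀ ω, 0 ≤ B ω := fun ω => by rcases hB01 ω with h | h <;> rw [h] <;> norm_num
  have hB1 : ∀ ω, B ω ≤ 1 := fun ω => by rcases hB01 ω with h | h <;> rw [h] <;> norm_num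
  have hfpos : ∀ x, 0 < f x := fun x => lt_of_lt_of_le hε (hfbd x).1
  -- upper bound: P-a.e. l (X ω) ≤ 1
  have hub : ∀ᵐ ω ∂P, l (X ω) ≤ 1 := by
    set g1 : S → ℝ := fun x => if 1 < l x then (l x)⁻¹ else 0 with hg1def
    have hs1 : MeasurableSet {x | 1 < l x} := measurableSet_lt measurable_const hl
    have hg1m : Measurable g1 := Measurable.ite hs1 hl.inv measurable_const
    have hg1bd : ∀ x, |g1 x| ≤ 1 := by
      intro x; rw [hg1def]; dsimp only; split_ifs with h
      · rw [abs_of_nonneg (inv_nonneg.2 (le_of_lt (lt_trans one_pos h)))]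
        exact inv_le_one_of_one_le₀ (le_of_lt h)
      · simp
    have heq := hlv g1 hg1m ⟨1, hg1bd⟩
    -- d ω := l (X ω) * W ω * g1 (X ω) - B ω * W ω * g1 (X ω) ≥ 0, ∫ d = 0
    set d : Ω → ℝ := fun ω => l (X ω) * W ω * g1 (X ω) - B ω * W ω * g1 (X ω) with hddef
    have hlg1bd : ∀ x, |l x * g1 x| ≤ 1 := by
      intro x; rw [hg1def]; dsimp only; split_ifs with h
      · rw [mul_inv_cancel₀ (ne_of_gt (lt_trans one_pos h))]; norm_num
      · simp
    have hint1 : Integrable (fun ω => l (X ω) * W ω * g1 (X ω)) P := by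
      apply intg_of_bdd P ((hl.comp hX).mul hW |>.mul (hg1m.comp hX)) (C := 1)
      intro ω
      calc |l (X ω) * W ω * g1 (X ω)| = |l (X ω) * g1 (X ω)| * |W ω| := by
            rw [← abs_mul, mul_right_comm]
        _ ≤ 1 * 1 := by
            apply mul_le_mul (hlg1bd _) (by rw [abs_of_nonneg (hWnn ω)]; exact hW1 ω)
              (abs_nonneg _) one_pos.le
        _ = 1 := by norm_num
    have hint2 : Integrable (fun ω => B ω * W ω * g1 (X ω)) P := by
      apply intg_of_bdd P ((hB.mul hW).mul (hg1m.comp hX)) (C := 1)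
      intro ω
      have := hg1bd (X ω)
      simp only [Pi.mul_apply, Function.comp_apply]; rw [abs_mul, abs_mul, abs_of_nonneg (hBnn ω), abs_of_nonneg (hWnn ω)]
      calc B ω * W ω * |g1 (X ω)| ≤ 1 * 1 * 1 := by
            apply mul_le_mul (mul_le_mul (hB1 ω) (hW1 ω) (hWnn ω) one_pos.le) this
              (abs_nonneg _) (by norm_num)
        _ = 1 := by norm_num
    have hdint : ∫ ω, d ω ∂P = 0 := by
      rw [hddef]; rw [integral_sub hint1 hint2, heq, sub_self]
    have hdnn : ∀ ω, 0 ≤ d ω := by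
      intro ω; rw [hddef]; dsimp only
      rw [hg1def]; dsimp only; split_ifs with h
      · have hlx : (0:ℝ) < l (X ω) := lt_trans one_pos h
        have h1 : B ω * (l (X ω))⁻¹ ≤ (l (X ω))⁻¹ :=
          mul_le_of_le_one_left (inv_nonneg.2 hlx.le) (hB1 ω)
        have h2 : (l (X ω))⁻¹ ≤ l (X ω) * (l (X ω))⁻¹ := by
          rw [mul_inv_cancel₀ (ne_of_gt hlx)]
          exact inv_le_one_of_one_le₀ h.le
        nlinarith [hWnn ω, mul_le_mul_of_nonneg_right (le_trans h1 h2) (hWnn ω)]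
      · simp
    have hd0 : ∀ᵐ ω ∂P, d ω = 0 := by
      have := (integral_eq_zero_iff_of_nonneg hdnn (hint1.sub hint2)).1 hdint
      filter_upwards [this] with ω h using h
    -- hence the set {W = 1 ∧ 1 < l (X ω)} is null
    have hnull : P {ω | W ω = 1 ∧ 1 < l (X ω)} = 0 := by
      have hd0' : P {ω | ¬ d ω = 0} = 0 := by simpa [ae_iff] using hd0
      refine measure_mono_null ?_ hd0'
      intro ω hω
      rcases hω with ⟨hw, hlω⟩
      simp only [Set.mem_setOf_eq, hddef, hg1def]
      rw [hw, if_pos hlω]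
      have hlx : (0:ℝ) < l (X ω) := lt_trans one_pos hlω
      have hBl : B ω * (l (X ω))⁻¹ < 1 := by
        calc B ω * (l (X ω))⁻¹ ≤ (l (X ω))⁻¹ :=
              mul_le_of_le_one_left (inv_nonneg.2 hlx.le) (hB1 ω)
          _ < 1 := by rw [inv_lt_one_iff₀]; right; exact hlω
      intro hcon
      simp only [mul_one] at hcon
      rw [mul_inv_cancel₀ (ne_of_gt hlx)] at hcon
      linarith
    -- positivity: transfer to P {l (X ω) > 1} = 0
    set g2 : S → ℝ := fun x => if 1 < l x then 1 else 0 with hg2def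
    have hg2m : Measurable g2 := Measurable.ite hs1 measurable_const measurable_const
    have hg2bd : ∀ x, |g2 x| ≤ 1 := by
      intro x; rw [hg2def]; dsimp only; split_ifs <;> simp
    have hg2nn : ∀ x, 0 ≤ g2 x := by
      intro x; rw [hg2def]; dsimp only; split_ifs <;> norm_num
    have heq2 := hVf g2 hg2m ⟨1, hg2bd⟩
    have hLHS0 : ∫ ω, W ω * g2 (X ω) ∂P = 0 := by
      apply integral_eq_zero_of_ae
      rw [Filter.EventuallyEq, ae_iff]
      refine measure_mono_null ?_ hnull
      intro ω hω
      simp only [Set.mem_setOf_eq, Pi.zero_apply] at hω ⊢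
      constructor
      · rcases hW01 ω with h | h
        · exfalso; apply hω; rw [h, zero_mul]
        · exact h
      · by_contra hc
        apply hω
        rw [hg2def]; dsimp only; rw [if_neg hc, mul_zero]
    have hg2X0 : ∀ᵐ ω ∂P, g2 (X ω) = 0 := by
      have hfg2int : Integrable (fun ω => f (X ω) * g2 (X ω)) P := by
        have hm : Measurable (fun ω => f (X ω) * g2 (X ω)) := (hf.comp hX).mul (hg2m.comp hX)
        apply intg_of_bdd P hm (C := 1)
        intro ω
        rw [abs_mul, abs_of_nonneg (hfpos _).le]
        calc f (X ω) * |g2 (X ω)| ≤ 1 * 1 :=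
              mul_le_mul (hfbd _).2 (hg2bd _) (abs_nonneg _) one_pos.le
          _ = 1 := by norm_num
      have hz : ∫ ω, f (X ω) * g2 (X ω) ∂P = 0 := by rw [← heq2, hLHS0]
      have := (integral_eq_zero_iff_of_nonneg
        (fun ω => mul_nonneg (hfpos _).le (hg2nn _)) hfg2int).1 hz
      filter_upwards [this] with ω h
      have : f (X ω) * g2 (X ω) = 0 := h
      rcases mul_eq_zero.1 this with h' | h'
      · exact absurd h' (ne_of_gt (hfpos _))
      · exact h'
    filter_upwards [hg2X0] with ω h
    by_contra hc
    push_neg at hc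
    rw [hg2def] at h; dsimp only at h; rw [if_pos hc] at h
    norm_num at h
  -- lower bound: P-a.e. 0 ≤ l (X ω)
  have hlb : ∀ᵐ ω ∂P, 0 ≤ l (X ω) := by
    set g3 : S → ℝ := fun x => if l x < 0 then (1 - l x)⁻¹ else 0 with hg3def
    have hs3 : MeasurableSet {x | l x < 0} := measurableSet_lt hl measurable_const
    have hg3m : Measurable g3 := Measurable.ite hs3 (measurable_const.sub hl).inv measurable_const
    have hg3nn : ∀ x, 0 ≤ g3 x := by
      intro x; rw [hg3def]; dsimp only; split_ifs with h
      · have h1 : (0:ℝ) < 1 - l x := by linarith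
        positivity
      · exact le_refl 0
    have hg3bd : ∀ x, |g3 x| ≤ 1 := by
      intro x; rw [hg3def]; dsimp only; split_ifs with h
      · have h1 : (1:ℝ) < 1 - l x := by linarith
        rw [abs_of_nonneg (by positivity)]
        exact inv_le_one_of_one_le₀ h1.le
      · simp
    have hlg3bd : ∀ x, |l x * g3 x| ≤ 1 := by
      intro x; rw [hg3def]; dsimp only; split_ifs with h
      · have h1 : (0:ℝ) < 1 - l x := by linarith
        rw [abs_mul, abs_of_neg h, abs_of_nonneg (by positivity)]
        rw [← div_eq_mul_inv, div_le_one h1]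
        linarith
      · simp
    have heq := hlv g3 hg3m ⟨1, hg3bd⟩
    have hint1 : Integrable (fun ω => B ω * W ω * g3 (X ω)) P := by
      have hm : Measurable (fun ω => B ω * W ω * g3 (X ω)) := (hB.mul hW).mul (hg3m.comp hX)
      apply intg_of_bdd P hm (C := 1)
      intro ω
      rw [abs_mul, abs_mul, abs_of_nonneg (hBnn ω), abs_of_nonneg (hWnn ω)]
      calc B ω * W ω * |g3 (X ω)| ≤ 1 * 1 * 1 := by
            apply mul_le_mul (mul_le_mul (hB1 ω) (hW1 ω) (hWnn ω) one_pos.le) (hg3bd _)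
              (abs_nonneg _) (by norm_num)
        _ = 1 := by norm_num
    have hint2 : Integrable (fun ω => l (X ω) * W ω * g3 (X ω)) P := by
      have hm : Measurable (fun ω => l (X ω) * W ω * g3 (X ω)) :=
        ((hl.comp hX).mul hW).mul (hg3m.comp hX)
      apply intg_of_bdd P hm (C := 1)
      intro ω
      calc |l (X ω) * W ω * g3 (X ω)| = |l (X ω) * g3 (X ω)| * |W ω| := by
            rw [← abs_mul, mul_right_comm]
        _ ≤ 1 * 1 := mul_le_mul (hlg3bd _)
            (by rw [abs_of_nonneg (hWnn ω)]; exact hW1 ω) (abs_nonneg _) one_pos.le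
        _ = 1 := by norm_num
    have hnn : ∀ ω, 0 ≤ - (l (X ω) * W ω * g3 (X ω)) := by
      intro ω; rw [hg3def]; dsimp only; split_ifs with h
      · have h1 : (0:ℝ) < 1 - l (X ω) := by linarith
        have : l (X ω) * (1 - l (X ω))⁻¹ ≤ 0 :=
          mul_nonpos_of_nonpos_of_nonneg h.le (by positivity)
        nlinarith [hWnn ω]
      · simp
    have hz : ∫ ω, - (l (X ω) * W ω * g3 (X ω)) ∂P = 0 := by
      rw [integral_neg, ← heq, neg_eq_zero]
      have h1 : 0 ≤ ∫ ω, B ω * W ω * g3 (X ω) ∂P :=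
        integral_nonneg fun ω => mul_nonneg (mul_nonneg (hBnn ω) (hWnn ω)) (hg3nn _)
      have h2 : ∫ ω, B ω * W ω * g3 (X ω) ∂P ≤ 0 := by
        rw [heq]
        have := integral_nonneg (μ := P) (f := fun ω => - (l (X ω) * W ω * g3 (X ω))) hnn
        rw [integral_neg] at this
        linarith
      linarith
    have hd0 : ∀ᵐ ω ∂P, - (l (X ω) * W ω * g3 (X ω)) = 0 :=
      (integral_eq_zero_iff_of_nonneg hnn hint2.neg).1 hz
    have hnull : P {ω | W ω = 1 ∧ l (X ω) < 0} = 0 := by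
      have hd0' : P {ω | ¬ - (l (X ω) * W ω * g3 (X ω)) = 0} = 0 := by simpa [ae_iff] using hd0
      refine measure_mono_null ?_ hd0'
      intro ω hω
      rcases hω with ⟨hw, hlω⟩
      simp only [Set.mem_setOf_eq, hg3def]
      rw [hw, if_pos hlω]
      have h1 : (0:ℝ) < 1 - l (X ω) := by linarith
      intro hcon
      rw [neg_eq_zero, mul_one] at hcon
      rcases mul_eq_zero.1 hcon with h' | h'
      · exact absurd h' (ne_of_lt hlω)
      · exact absurd h' (ne_of_gt (by positivity))
    set g4 : S → ℝ := fun x => if l x < 0 then 1 else 0 with hg4def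
    have hg4m : Measurable g4 := Measurable.ite hs3 measurable_const measurable_const
    have hg4bd : ∀ x, |g4 x| ≤ 1 := by
      intro x; rw [hg4def]; dsimp only; split_ifs <;> simp
    have hg4nn : ∀ x, 0 ≤ g4 x := by
      intro x; rw [hg4def]; dsimp only; split_ifs <;> norm_num
    have heq2 := hVf g4 hg4m ⟨1, hg4bd⟩
    have hLHS0 : ∫ ω, W ω * g4 (X ω) ∂P = 0 := by
      apply integral_eq_zero_of_ae
      rw [Filter.EventuallyEq, ae_iff]
      refine measure_mono_null ?_ hnull
      intro ω hω
      simp only [Set.mem_setOf_eq, Pi.zero_apply] at hω ⊢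
      constructor
      · rcases hW01 ω with h | h
        · exfalso; apply hω; rw [h, zero_mul]
        · exact h
      · by_contra hc
        apply hω
        rw [hg4def]; dsimp only; rw [if_neg hc, mul_zero]
    have hg4X0 : ∀ᵐ ω ∂P, g4 (X ω) = 0 := by
      have hm : Measurable (fun ω => f (X ω) * g4 (X ω)) := (hf.comp hX).mul (hg4m.comp hX)
      have hfg4int : Integrable (fun ω => f (X ω) * g4 (X ω)) P := by
        apply intg_of_bdd P hm (C := 1)
        intro ω
        rw [abs_mul, abs_of_nonneg (hfpos _).le]
        calc f (X ω) * |g4 (X ω)| ≤ 1 * 1 :=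
              mul_le_mul (hfbd _).2 (hg4bd _) (abs_nonneg _) one_pos.le
          _ = 1 := by norm_num
      have hz4 : ∫ ω, f (X ω) * g4 (X ω) ∂P = 0 := by rw [← heq2, hLHS0]
      have := (integral_eq_zero_iff_of_nonneg
        (fun ω => mul_nonneg (hfpos _).le (hg4nn _)) hfg4int).1 hz4
      filter_upwards [this] with ω h
      rcases mul_eq_zero.1 h with h' | h'
      · exact absurd h' (ne_of_gt (hfpos _))
      · exact h'
    filter_upwards [hg4X0] with ω h
    by_contra hc
    push_neg at hc
    rw [hg4def] at h; dsimp only at h; rw [if_pos hc] at h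
    norm_num at h
  -- a.e. equality with the clamp
  have hae : ∀ᵐ ω ∂P, l (X ω) = max 0 (min 1 (l (X ω))) := by
    filter_upwards [hub, hlb] with ω h1 h0
    rw [min_eq_right h1, max_eq_right h0]
  refine ⟨hae, ?_⟩
  set L : S → ℝ := fun x => max 0 (min 1 (l x)) with hLdef
  have hLm : Measurable L := measurable_const.max (measurable_const.min hl)
  have hLnn : ∀ x, 0 ≤ L x := fun x => le_max_left 0 _
  have hL1 : ∀ x, L x ≤ 1 := fun x => max_le one_pos.le (min_le_left 1 _)
  have hLbd : ∀ x, |L x| ≤ 1 := fun x => by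
    rw [abs_of_nonneg (hLnn x)]; exact hL1 x
  have haeX : (fun ω => l (X ω)) =ᵐ[P] fun ω => L (X ω) := hae
  have hfne : ∀ x, f x ≠ 0 := fun x => ne_of_gt (hfpos x)
  have hinvbd : ∀ x, |(f x)⁻¹| ≤ ε⁻¹ := by
    intro x
    rw [abs_of_nonneg (inv_nonneg.2 (hfpos x).le)]
    exact inv_anti₀ hε (hfbd x).1
  set g' : S → ℝ := fun x => (f x)⁻¹ with hg'def
  have hg'm : Measurable g' := hf.inv
  set g : S → ℝ := fun x => L x * (f x)⁻¹ with hgdef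
  have hgm : Measurable g := hLm.mul hf.inv
  have hgbd : ∀ x, |g x| ≤ ε⁻¹ := by
    intro x
    rw [hgdef]; dsimp only
    rw [abs_mul]
    calc |L x| * |(f x)⁻¹| ≤ 1 * ε⁻¹ :=
          mul_le_mul (hLbd x) (hinvbd x) (abs_nonneg _) one_pos.le
      _ = ε⁻¹ := one_mul _
  calc ∫ ω, l (X ω) ∂P = ∫ ω, L (X ω) ∂P := integral_congr_ae haeX
    _ = ∫ ω, f (X ω) * g (X ω) ∂P := by
        congr 1
        funext ω
        rw [hgdef]; dsimp only
        rw [mul_comm (L (X ω)), ← mul_assoc, mul_inv_cancel₀ (hfne _), one_mul]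
    _ = ∫ ω, W ω * g (X ω) ∂P := (hVf g hgm ⟨ε⁻¹, hgbd⟩).symm
    _ = ∫ ω, l (X ω) * W ω * g' (X ω) ∂P := by
        apply integral_congr_ae
        filter_upwards [haeX] with ω h
        rw [hgdef, hg'def]; dsimp only
        rw [h]; ring
    _ = ∫ ω, B ω * W ω * g' (X ω) ∂P := (hlv g' hg'm ⟨ε⁻¹, hinvbd⟩).symm
    _ = ∫ ω, W ω * B ω * g' (X ω) ∂P := by congr 1; funext ω; ring
    _ = ∫ ω, f (X ω) * B ω * g' (X ω) ∂P := hU g' hg'm ⟨ε⁻¹, hinvbd⟩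
    _ = ∫ ω, B ω ∂P := by
        congr 1
        funext ω
        rw [hg'def]; dsimp only
        rw [mul_comm (f (X ω)), mul_assoc, mul_inv_cancel₀ (hfne _), mul_one]

private lemma int_ind {Ω : Type*} [MeasurableSpace Ω] (P : Measure Ω) [IsFiniteMeasure P]
    {s : Set Ω} (hs : MeasurableSet s) :
    ∫ ω, s.indicator (fun _ => (1:ℝ)) ω ∂P = (P s).toReal := by
  exact integral_indicator_one (μ := P) hs


/-- identification of principal-stratum proportions: under unconfoundedness,
positivity and monotonicity, E[ℓ0(X)] = P(A1 = A0 = 1), E[1 − ℓ1(X)] = P(A1 = A0 = 0),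
E[ℓ1(X) − ℓ0(X)] = P(A1 > A0), and these three proportions sum to 1. -/
theorem stmt_17
    {Ω : Type*} [MeasurableSpace Ω] (P : Measure Ω) [IsProbabilityMeasure P]
    {S : Type*} [mS : MeasurableSpace S]
    (X : Ω → S) (hX : Measurable X)
    (Z A0 A1 : Ω → ℝ)
    (hZ : Measurable Z) (hA0 : Measurable A0) (hA1 : Measurable A1)
    (hZ01 : ∀ ω, Z ω = 0 ∨ Z ω = 1)
    (hA0_01 : ∀ ω, A0 ω = 0 ∨ A0 ω = 1)
    (hA1_01 : ∀ ω, A1 ω = 0 ∨ A1 ω = 1)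
    (A : Ω → ℝ) (hA : A = fun ω => (1 - Z ω) * A0 ω + Z ω * A1 ω)
    (e : S → ℝ) (he : Measurable e) (ε : ℝ) (hε : 0 < ε) (hε2 : ε < 1/2)
    (hebd : ∀ x, ε ≤ e x ∧ e x ≤ 1 - ε)
    (hVe : ∀ g : S → ℝ, Measurable g → (∃ C, ∀ x, |g x| ≤ C) →
      ∫ ω, Z ω * g (X ω) ∂P = ∫ ω, e (X ω) * g (X ω) ∂P)
    (hUnconf : ∀ ψ : ℝ × ℝ → ℝ, Measurable ψ → (∃ C, ∀ v, |ψ v| ≤ C) →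
      ∀ g : S → ℝ, Measurable g → (∃ C, ∀ x, |g x| ≤ C) →
      ∫ ω, Z ω * ψ (A0 ω, A1 ω) * g (X ω) ∂P
        = ∫ ω, e (X ω) * ψ (A0 ω, A1 ω) * g (X ω) ∂P)
    (l0 l1 : S → ℝ) (hl0 : Measurable l0) (hl1 : Measurable l1)
    (hl0v : ∀ g : S → ℝ, Measurable g → (∃ C, ∀ x, |g x| ≤ C) →
      ∫ ω, A ω * (if Z ω = 0 then (1:ℝ) else 0) * g (X ω) ∂P
        = ∫ ω, l0 (X ω) * (if Z ω = 0 then (1:ℝ) else 0) * g (X ω) ∂P)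
    (hl1v : ∀ g : S → ℝ, Measurable g → (∃ C, ∀ x, |g x| ≤ C) →
      ∫ ω, A ω * (if Z ω = 1 then (1:ℝ) else 0) * g (X ω) ∂P
        = ∫ ω, l1 (X ω) * (if Z ω = 1 then (1:ℝ) else 0) * g (X ω) ∂P)
    (hMono : P {ω | A0 ω ≤ A1 ω} = 1) :
    (∫ ω, l0 (X ω) ∂P) = (P {ω | A1 ω = 1 ∧ A0 ω = 1}).toReal
    ∧ (∫ ω, (1 - l1 (X ω)) ∂P) = (P {ω | A1 ω = 0 ∧ A0 ω = 0}).toReal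
    ∧ (∫ ω, (l1 (X ω) - l0 (X ω)) ∂P) = (P {ω | A1 ω = 1 ∧ A0 ω = 0}).toReal
    ∧ (P {ω | A1 ω = 1 ∧ A0 ω = 1}).toReal + (P {ω | A1 ω = 0 ∧ A0 ω = 0}).toReal
        + (P {ω | A1 ω = 1 ∧ A0 ω = 0}).toReal = 1 := by
  have hZbd : ∀ ω, |Z ω| ≤ 1 := fun ω => by rcases hZ01 ω with h|h <;> rw [h] <;> norm_num
  have hA0bd : ∀ ω, |A0 ω| ≤ 1 := fun ω => by rcases hA0_01 ω with h|h <;> rw [h] <;> norm_num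
  have hA1bd : ∀ ω, |A1 ω| ≤ 1 := fun ω => by rcases hA1_01 ω with h|h <;> rw [h] <;> norm_num
  have hclamp : ∀ a : ℝ, (a = 0 ∨ a = 1) → max 0 (min 1 a) = a := by
    rintro a (h|h) <;> rw [h] <;> norm_num
  -- case z = 1
  have hebd1 : ∀ x, ε ≤ e x ∧ e x ≤ 1 := fun x => ⟨(hebd x).1, le_trans (hebd x).2 (by linarith)⟩
  have hU1 : ∀ g : S → ℝ, Measurable g → (∃ C, ∀ x, |g x| ≤ C) →
      ∫ ω, Z ω * A1 ω * g (X ω) ∂P = ∫ ω, e (X ω) * A1 ω * g (X ω) ∂P := by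
    intro g hg hgb
    have hψm : Measurable (fun v : ℝ × ℝ => max 0 (min 1 v.2)) :=
      measurable_const.max (measurable_const.min measurable_snd)
    have hψb : ∀ v : ℝ × ℝ, |max 0 (min 1 v.2)| ≤ 1 := by
      intro v
      rw [abs_of_nonneg (le_max_left _ _)]
      exact max_le one_pos.le (min_le_left _ _)
    have := hUnconf (fun v => max 0 (min 1 v.2)) hψm ⟨1, hψb⟩ g hg hgb
    have hψ : ∀ ω, max 0 (min 1 (A0 ω, A1 ω).2) = A1 ω := fun ω => hclamp _ (hA1_01 ω)
    simpa only [hψ] using this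
  have hlv1 : ∀ g : S → ℝ, Measurable g → (∃ C, ∀ x, |g x| ≤ C) →
      ∫ ω, A1 ω * Z ω * g (X ω) ∂P = ∫ ω, l1 (X ω) * Z ω * g (X ω) ∂P := by
    intro g hg hgb
    have h1 : ∀ ω, A ω * (if Z ω = 1 then (1:ℝ) else 0) = A1 ω * Z ω := by
      intro ω; rw [hA]; dsimp only; rcases hZ01 ω with h|h <;> rw [h] <;> norm_num
    have h2 : ∀ ω, (if Z ω = 1 then (1:ℝ) else 0) = Z ω := by
      intro ω; rcases hZ01 ω with h|h <;> rw [h] <;> norm_num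
    have := hl1v g hg hgb
    calc ∫ ω, A1 ω * Z ω * g (X ω) ∂P
        = ∫ ω, A ω * (if Z ω = 1 then (1:ℝ) else 0) * g (X ω) ∂P := by
          congr 1; funext ω; rw [h1]
      _ = ∫ ω, l1 (X ω) * (if Z ω = 1 then (1:ℝ) else 0) * g (X ω) ∂P := this
      _ = ∫ ω, l1 (X ω) * Z ω * g (X ω) ∂P := by congr 1; funext ω; rw [h2]
  obtain ⟨hae1, I1⟩ := key_int P X hX Z A1 hZ hA1 hZ01 hA1_01 e he ε hε hebd1 hVe hU1 l1 hl1 hlv1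
  -- case z = 0
  have hW01 : ∀ ω, 1 - Z ω = 0 ∨ 1 - Z ω = 1 := by
    intro ω; rcases hZ01 ω with h|h <;> rw [h] <;> [right; left] <;> norm_num
  have hfbd0 : ∀ x, ε ≤ 1 - e x ∧ 1 - e x ≤ 1 := by
    intro x; constructor <;> [linarith [(hebd x).2]; linarith [(hebd x).1, hε]]
  have hVf0 : ∀ g : S → ℝ, Measurable g → (∃ C, ∀ x, |g x| ≤ C) →
      ∫ ω, (1 - Z ω) * g (X ω) ∂P = ∫ ω, (1 - e (X ω)) * g (X ω) ∂P := by
    rintro g hg ⟨C, hC⟩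
    have hintg : Integrable (fun ω => g (X ω)) P :=
      intg_of_bdd P (hg.comp hX) (C := C) (fun ω => hC (X ω))
    have hintZg : Integrable (fun ω => Z ω * g (X ω)) P := by
      apply intg_of_bdd P (hZ.mul (hg.comp hX)) (C := C)
      intro ω
      simp only [Pi.mul_apply, Function.comp_apply]; rw [abs_mul]
      calc |Z ω| * |g (X ω)| ≤ 1 * C := mul_le_mul (hZbd ω) (hC _) (abs_nonneg _) one_pos.le
        _ = C := one_mul _
    have hinteg : Integrable (fun ω => e (X ω) * g (X ω)) P := by
      apply intg_of_bdd P ((he.comp hX).mul (hg.comp hX)) (C := C)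
      intro ω
      simp only [Pi.mul_apply, Function.comp_apply]; rw [abs_mul]
      have he1 : |e (X ω)| ≤ 1 := by
        rw [abs_of_nonneg (le_trans hε.le (hebd _).1)]; exact (hebd1 _).2
      calc |e (X ω)| * |g (X ω)| ≤ 1 * C := mul_le_mul he1 (hC _) (abs_nonneg _) one_pos.le
        _ = C := one_mul _
    have h1 : (fun ω => (1 - Z ω) * g (X ω)) = fun ω => g (X ω) - Z ω * g (X ω) := by
      funext ω; ring
    have h2 : (fun ω => (1 - e (X ω)) * g (X ω)) = fun ω => g (X ω) - e (X ω) * g (X ω) := by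
      funext ω; ring
    rw [h1, h2, integral_sub hintg hintZg, integral_sub hintg hinteg, hVe g hg ⟨C, hC⟩]
  have hU0 : ∀ g : S → ℝ, Measurable g → (∃ C, ∀ x, |g x| ≤ C) →
      ∫ ω, (1 - Z ω) * A0 ω * g (X ω) ∂P = ∫ ω, (1 - e (X ω)) * A0 ω * g (X ω) ∂P := by
    rintro g hg ⟨C, hC⟩
    have hbd : ∀ ω, |A0 ω * g (X ω)| ≤ C := by
      intro ω
      rw [abs_mul]
      calc |A0 ω| * |g (X ω)| ≤ 1 * C := mul_le_mul (hA0bd ω) (hC _) (abs_nonneg _) one_pos.le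
        _ = C := one_mul _
    have hintg : Integrable (fun ω => A0 ω * g (X ω)) P :=
      intg_of_bdd P (hA0.mul (hg.comp hX)) (C := C) hbd
    have hintZg : Integrable (fun ω => Z ω * A0 ω * g (X ω)) P := by
      apply intg_of_bdd P ((hZ.mul hA0).mul (hg.comp hX)) (C := C)
      intro ω
      simp only [Pi.mul_apply, Function.comp_apply]; rw [mul_assoc, abs_mul]
      calc |Z ω| * |A0 ω * g (X ω)| ≤ 1 * C :=
            mul_le_mul (hZbd ω) (hbd _) (abs_nonneg _) one_pos.le
        _ = C := one_mul _
    have hinteg : Integrable (fun ω => e (X ω) * A0 ω * g (X ω)) P := by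
      apply intg_of_bdd P (((he.comp hX).mul hA0).mul (hg.comp hX)) (C := C)
      intro ω
      simp only [Pi.mul_apply, Function.comp_apply]; rw [mul_assoc, abs_mul]
      have he1 : |e (X ω)| ≤ 1 := by
        rw [abs_of_nonneg (le_trans hε.le (hebd _).1)]; exact (hebd1 _).2
      calc |e (X ω)| * |A0 ω * g (X ω)| ≤ 1 * C :=
            mul_le_mul he1 (hbd _) (abs_nonneg _) one_pos.le
        _ = C := one_mul _
    have hUnc : ∫ ω, Z ω * A0 ω * g (X ω) ∂P = ∫ ω, e (X ω) * A0 ω * g (X ω) ∂P := by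
      have hψm : Measurable (fun v : ℝ × ℝ => max 0 (min 1 v.1)) :=
        measurable_const.max (measurable_const.min measurable_fst)
      have hψb : ∀ v : ℝ × ℝ, |max 0 (min 1 v.1)| ≤ 1 := by
        intro v
        rw [abs_of_nonneg (le_max_left _ _)]
        exact max_le one_pos.le (min_le_left _ _)
      have := hUnconf (fun v => max 0 (min 1 v.1)) hψm ⟨1, hψb⟩ g hg ⟨C, hC⟩
      have hψ : ∀ ω, max 0 (min 1 (A0 ω, A1 ω).1) = A0 ω := fun ω => hclamp _ (hA0_01 ω)
      simpa only [hψ] using this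
    have h1 : (fun ω => (1 - Z ω) * A0 ω * g (X ω))
        = fun ω => A0 ω * g (X ω) - Z ω * A0 ω * g (X ω) := by funext ω; ring
    have h2 : (fun ω => (1 - e (X ω)) * A0 ω * g (X ω))
        = fun ω => A0 ω * g (X ω) - e (X ω) * A0 ω * g (X ω) := by funext ω; ring
    rw [h1, h2, integral_sub hintg hintZg, integral_sub hintg hinteg, hUnc]
  have hlv0 : ∀ g : S → ℝ, Measurable g → (∃ C, ∀ x, |g x| ≤ C) →
      ∫ ω, A0 ω * (1 - Z ω) * g (X ω) ∂P = ∫ ω, l0 (X ω) * (1 - Z ω) * g (X ω) ∂P := by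
    intro g hg hgb
    have h1 : ∀ ω, A ω * (if Z ω = 0 then (1:ℝ) else 0) = A0 ω * (1 - Z ω) := by
      intro ω; rw [hA]; dsimp only; rcases hZ01 ω with h|h <;> rw [h] <;> norm_num
    have h2 : ∀ ω, (if Z ω = 0 then (1:ℝ) else 0) = 1 - Z ω := by
      intro ω; rcases hZ01 ω with h|h <;> rw [h] <;> norm_num
    have := hl0v g hg hgb
    calc ∫ ω, A0 ω * (1 - Z ω) * g (X ω) ∂P
        = ∫ ω, A ω * (if Z ω = 0 then (1:ℝ) else 0) * g (X ω) ∂P := by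
          congr 1; funext ω; rw [h1]
      _ = ∫ ω, l0 (X ω) * (if Z ω = 0 then (1:ℝ) else 0) * g (X ω) ∂P := this
      _ = ∫ ω, l0 (X ω) * (1 - Z ω) * g (X ω) ∂P := by congr 1; funext ω; rw [h2]
  obtain ⟨hae0, I0⟩ := key_int P X hX (fun ω => 1 - Z ω) A0 (measurable_const.sub hZ) hA0
    hW01 hA0_01 (fun x => 1 - e x) (measurable_const.sub he) ε hε hfbd0 hVf0 hU0 l0 hl0 hlv0
  -- integrability of l0, l1 composed with X
  have hintl1 : Integrable (fun ω => l1 (X ω)) P := by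
    have hbnd : Integrable (fun ω => max 0 (min 1 (l1 (X ω)))) P := by
      apply intg_of_bdd P (measurable_const.max (measurable_const.min (hl1.comp hX))) (C := 1)
      intro ω
      rw [abs_of_nonneg (le_max_left _ _)]
      exact max_le one_pos.le (min_le_left _ _)
    exact hbnd.congr (hae1.mono fun ω h => h.symm)
  have hintl0 : Integrable (fun ω => l0 (X ω)) P := by
    have hbnd : Integrable (fun ω => max 0 (min 1 (l0 (X ω)))) P := by
      apply intg_of_bdd P (measurable_const.max (measurable_const.min (hl0.comp hX))) (C := 1)
      intro ω
      rw [abs_of_nonneg (le_max_left _ _)]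
      exact max_le one_pos.le (min_le_left _ _)
    exact hbnd.congr (hae0.mono fun ω h => h.symm)
  have hintA0 : Integrable A0 P := intg_of_bdd P hA0 (C := 1) hA0bd
  have hintA1 : Integrable A1 P := intg_of_bdd P hA1 (C := 1) hA1bd
  -- monotonicity a.e.
  have hsle : MeasurableSet {ω | A0 ω ≤ A1 ω} := measurableSet_le hA0 hA1
  have hmae : ∀ᵐ ω ∂P, A0 ω ≤ A1 ω := by
    rw [ae_iff]
    have := measure_compl hsle (measure_ne_top P _)
    rw [hMono, measure_univ] at this
    simpa [Set.compl_setOf] using this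
  -- sets and indicator identities
  have hs11 : MeasurableSet {ω | A1 ω = 1 ∧ A0 ω = 1} :=
    (hA1 (measurableSet_singleton 1)).inter (hA0 (measurableSet_singleton 1))
  have hs00 : MeasurableSet {ω | A1 ω = 0 ∧ A0 ω = 0} :=
    (hA1 (measurableSet_singleton 0)).inter (hA0 (measurableSet_singleton 0))
  have hs10 : MeasurableSet {ω | A1 ω = 1 ∧ A0 ω = 0} :=
    (hA1 (measurableSet_singleton 1)).inter (hA0 (measurableSet_singleton 0))
  have hA0eq : A0 =ᵐ[P] ({ω | A1 ω = 1 ∧ A0 ω = 1}).indicator (fun _ => (1:ℝ)) := by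
    filter_upwards [hmae] with ω h
    rw [Set.indicator_apply]
    split_ifs with hm
    · exact hm.2
    · rcases hA0_01 ω with h0|h0
      · exact h0
      · exfalso
        apply hm
        refine ⟨?_, h0⟩
        rcases hA1_01 ω with h1|h1
        · rw [h0, h1] at h; linarith
        · exact h1
  have hA1eq : (fun ω => 1 - A1 ω) =ᵐ[P] ({ω | A1 ω = 0 ∧ A0 ω = 0}).indicator (fun _ => (1:ℝ)) := by
    filter_upwards [hmae] with ω h
    rw [Set.indicator_apply]
    split_ifs with hm
    · rw [hm.1]; norm_num
    · rcases hA1_01 ω with h1|h1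
      · exfalso
        apply hm
        refine ⟨h1, ?_⟩
        rcases hA0_01 ω with h0|h0
        · exact h0
        · rw [h0, h1] at h; linarith
      · rw [h1]; norm_num
  have hdeq : (fun ω => A1 ω - A0 ω)
      =ᵐ[P] ({ω | A1 ω = 1 ∧ A0 ω = 0}).indicator (fun _ => (1:ℝ)) := by
    filter_upwards [hmae] with ω h
    rw [Set.indicator_apply]
    split_ifs with hm
    · rw [hm.1, hm.2]; norm_num
    · rcases hA0_01 ω with h0|h0
      · rcases hA1_01 ω with h1|h1
        · rw [h0, h1]; norm_num
        · exact absurd ⟨h1, h0⟩ hm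
      · rcases hA1_01 ω with h1|h1
        · rw [h0, h1] at h; linarith
        · rw [h0, h1]; norm_num
  have e11 : ∫ ω, A0 ω ∂P = (P {ω | A1 ω = 1 ∧ A0 ω = 1}).toReal := by
    rw [integral_congr_ae hA0eq, int_ind P hs11]
  have e00 : ∫ ω, (1 - A1 ω) ∂P = (P {ω | A1 ω = 0 ∧ A0 ω = 0}).toReal := by
    rw [integral_congr_ae hA1eq, int_ind P hs00]
  have e10 : ∫ ω, (A1 ω - A0 ω) ∂P = (P {ω | A1 ω = 1 ∧ A0 ω = 0}).toReal := by
    rw [integral_congr_ae hdeq, int_ind P hs10]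
  have hsub1 : ∫ ω, (1 - A1 ω) ∂P = 1 - ∫ ω, A1 ω ∂P := by
    rw [integral_sub (integrable_const 1) hintA1]
    simp
  have hsub2 : ∫ ω, (A1 ω - A0 ω) ∂P = ∫ ω, A1 ω ∂P - ∫ ω, A0 ω ∂P :=
    integral_sub hintA1 hintA0
  refine ⟨by rw [I0, e11], ?_, ?_, ?_⟩
  · rw [integral_sub (integrable_const 1) hintl1, I1, ← e00, hsub1]
    simp
  · rw [integral_sub hintl1 hintl0, I1, I0, ← e10, hsub2]
  · rw [← e11, ← e00, ← e10, hsub1, hsub2]; ring
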